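/- Single-source generalization bound: For any μ > 0 and any scoring function f in hypothesis space F, the target error satisfies L_Q(h_f) ≤ L^μ_P(f) + d^μ_f(P, Q) + λ, where λ = min_{g ∈ F} { L^μ_P(g) + L^μ_Q(g) } and d^μ_f(P,Q) = sup_{f' ∈ F} { E_{x∼Q}[W_μ(ω_{f'}(x, h_f(x)))] − E_{x∼P}[W_μ(ω_{f'}(x, h_f(x)))] } is the margin disparity discrepancy. -/
import Mathlib

/-- The ramp loss `W_μ`. -/
noncomputable def ramp (μ v : ℝ) : ℝ :=
  if μ ≤ v then 0 else if v ≤ 0 then 1 else 1 - v / μ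

/-- The margin `ω_f(x,y) = (f(x)(y) - max_{y' ≠ y} f(x)(y'))/2` of a scoring function. -/
noncomputable def margin {X Y : Type*} [Fintype Y] [DecidableEq Y] [Nontrivial Y]
    (f : X → Y → ℝ) (x : X) (y : Y) : ℝ :=
  (f x y - (Finset.univ.erase y).sup'
      (by obtain ⟨b, hb⟩ := exists_ne y
          exact ⟨b, Finset.mem_erase.mpr ⟨hb, Finset.mem_univ b⟩⟩) (f x)) / 2

lemma ramp_nonneg {μ v : ℝ} (hμ : 0 < μ) : 0 ≤ ramp μ v := by
  unfold ramp
  split_ifs with h1 h2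
  · norm_num
  · norm_num
  · push_neg at h1 h2
    have : v / μ ≤ 1 := (div_le_one hμ).mpr h1.le
    linarith

lemma ramp_le_one {μ v : ℝ} (hμ : 0 < μ) : ramp μ v ≤ 1 := by
  unfold ramp
  split_ifs with h1 h2
  · norm_num
  · norm_num
  · push_neg at h1 h2
    have : 0 ≤ v / μ := div_nonneg h2.le hμ.le
    linarith

lemma ramp_of_nonpos {μ v : ℝ} (hμ : 0 < μ) (hv : v ≤ 0) : ramp μ v = 1 := by
  unfold ramp
  rw [if_neg (by linarith), if_pos hv]


open MeasureTheory

/-- Single-source generalization bound: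
`L_Q(h_f) ≤ L^μ_P(f) + d^μ_f(P, Q) + λ`, where `λ` is the ideal combined margin loss over the
hypothesis space `F` and `d` is the margin disparity discrepancy (a supremum over `F`).
`lab g` is the labeling function induced by the scoring function `g` (an argmax of `g x`). -/
theorem single_source_bound {X Y : Type*} [MeasurableSpace X] [MeasurableSpace Y]
    [Fintype Y] [DecidableEq Y] [Nontrivial Y]
    (P Q : Measure (X × Y)) [IsProbabilityMeasure P] [IsProbabilityMeasure Q]
    (μ : ℝ) (hμ : 0 < μ)
    (F : Set (X → Y → ℝ)) (hF : F.Nonempty)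
    (lab : (X → Y → ℝ) → X → Y)
    (hlab : ∀ (g : X → Y → ℝ) (x : X) (y : Y), g x y ≤ g x (lab g x))
    (f : X → Y → ℝ) (hfF : f ∈ F)
    (lam : ℝ)
    (hlam : IsLeast {v : ℝ | ∃ g ∈ F,
      v = (∫ z, ramp μ (margin g z.1 z.2) ∂P) + ∫ z, ramp μ (margin g z.1 z.2) ∂Q} lam)
    (d : ℝ)
    (hd : IsLUB {v : ℝ | ∃ f' ∈ F,
      v = (∫ z, ramp μ (margin f' z.1 (lab f z.1)) ∂Q)
        - ∫ z, ramp μ (margin f' z.1 (lab f z.1)) ∂P} d)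
    (hint : ∀ g ∈ F,
      Integrable (fun z : X × Y => ramp μ (margin g z.1 (lab f z.1))) P ∧
      Integrable (fun z : X × Y => ramp μ (margin g z.1 (lab f z.1))) Q ∧
      Integrable (fun z : X × Y => ramp μ (margin g z.1 z.2)) P ∧
      Integrable (fun z : X × Y => ramp μ (margin g z.1 z.2)) Q)
    (hind : Integrable (fun z : X × Y => if lab f z.1 ≠ z.2 then (1 : ℝ) else 0) Q) :
    (∫ z, (if lab f z.1 ≠ z.2 then (1 : ℝ) else 0) ∂Q)
      ≤ (∫ z, ramp μ (margin f z.1 z.2) ∂P) + d + lam := by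
  obtain ⟨g, hgF, hlameq⟩ := hlam.1
  obtain ⟨hgP1, hgQ1, hgP2, hgQ2⟩ := hint g hgF
  obtain ⟨-, -, hfP2, -⟩ := hint f hfF
  -- pointwise inequality A
  have hA : ∀ z : X × Y, (if lab f z.1 ≠ z.2 then (1:ℝ) else 0)
      ≤ ramp μ (margin g z.1 z.2) + ramp μ (margin g z.1 (lab f z.1)) := by
    intro ⟨x, y⟩
    dsimp only
    split_ifs with h
    · -- lab f x ≠ y
      have hne : lab f x ≠ y := h
      have hmem1 : lab f x ∈ (Finset.univ.erase y) :=
        Finset.mem_erase.mpr ⟨hne, Finset.mem_univ _⟩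
      have hmem2 : y ∈ (Finset.univ.erase (lab f x)) :=
        Finset.mem_erase.mpr ⟨fun hy => hne hy.symm, Finset.mem_univ _⟩
      have h1 : margin g x y ≤ (g x y - g x (lab f x)) / 2 := by
        unfold margin
        have := Finset.le_sup' (g x) hmem1
        linarith
      have h2 : margin g x (lab f x) ≤ (g x (lab f x) - g x y) / 2 := by
        unfold margin
        have := Finset.le_sup' (g x) hmem2
        linarith
      have hsum : margin g x y + margin g x (lab f x) ≤ 0 := by linarith
      rcases le_or_gt (margin g x y) 0 with hc | hc
      · rw [ramp_of_nonpos hμ hc]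
        have := ramp_nonneg (v := margin g x (lab f x)) hμ
        linarith
      · have hb : margin g x (lab f x) ≤ 0 := by linarith
        rw [ramp_of_nonpos hμ hb]
        have := ramp_nonneg (v := margin g x y) hμ
        linarith
    · have := ramp_nonneg (v := margin g x y) hμ
      have := ramp_nonneg (v := margin g x (lab f x)) hμ
      linarith
  -- pointwise inequality B
  have hB : ∀ z : X × Y, ramp μ (margin g z.1 (lab f z.1))
      ≤ ramp μ (margin g z.1 z.2) + ramp μ (margin f z.1 z.2) := by
    intro ⟨x, y⟩
    dsimp only
    rcases eq_or_ne (lab f x) y with h | h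
    · rw [h]
      have := ramp_nonneg (v := margin f x y) hμ
      linarith
    · have hmem1 : lab f x ∈ (Finset.univ.erase y) :=
        Finset.mem_erase.mpr ⟨h, Finset.mem_univ _⟩
      have hle : f x y ≤ f x (lab f x) := hlab f x y
      have hsup := Finset.le_sup' (f x) hmem1
      have hm : margin f x y ≤ 0 := by
        unfold margin
        apply div_nonpos_of_nonpos_of_nonneg ?_ (by norm_num)
        linarith
      rw [ramp_of_nonpos hμ hm]
      have h1 := ramp_le_one (μ := μ) (v := margin g x (lab f x)) hμ
      have h2 := ramp_nonneg (v := margin g x y) hμ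
      linarith
  -- integrate A over Q
  have stepA : (∫ z, (if lab f z.1 ≠ z.2 then (1:ℝ) else 0) ∂Q)
      ≤ (∫ z, ramp μ (margin g z.1 z.2) ∂Q) + ∫ z, ramp μ (margin g z.1 (lab f z.1)) ∂Q := by
    rw [← integral_add hgQ2 hgQ1]
    exact integral_mono hind (hgQ2.add hgQ1) hA
  -- d bound
  have stepD : (∫ z, ramp μ (margin g z.1 (lab f z.1)) ∂Q)
      - (∫ z, ramp μ (margin g z.1 (lab f z.1)) ∂P) ≤ d :=
    hd.1 ⟨g, hgF, rfl⟩
  -- integrate B over P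
  have stepB : (∫ z, ramp μ (margin g z.1 (lab f z.1)) ∂P)
      ≤ (∫ z, ramp μ (margin g z.1 z.2) ∂P) + ∫ z, ramp μ (margin f z.1 z.2) ∂P := by
    rw [← integral_add hgP2 hfP2]
    exact integral_mono hgP1 (hgP2.add hfP2) hB
  linarith [hlameq.ge, hlameq.le]
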